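/- arXiv:2109.00241 — 3 statements merged into one kernel-verified Lean document; each statement's English description precedes it below -/
import Mathlib

section
/- Let w and w' be words over {2,3} of the same length n with the same number of 2's and 3's, ordered lexicographically with 2 < 3. If w is strictly smaller than w' in lexicographic order, then the coefficient of δ_{cat₀(w')} in K_{1,0}(w) is zero. Moreover, for every word w over {2,3}, the coefficient of δ_{cat₀(w)} in K_{1,0}(w) equals 1; equivalently, the identity partition is the unique good-shuffle realizing cat₀(w) from its own blocks. Hence the matrix (M_{w,w'}) of these coefficients, over all words with fixed numbers of 2's and 3's, is triangular with 1's on the diagonal. -/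
/-- Words over the alphabet `{0,1}`, encoded with `false` = `0` and `true` = `1`. -/
abbrev Word : Type := List Bool

/-- The ℚ-vector space `A` of finitely supported functions on words over `{0,1}`. -/
abbrev A01 : Type := Word →₀ ℚ

/-- The basis element `δ_x` of `A` attached to a word `x`. -/
noncomputable def δ (x : Word) : A01 := Finsupp.single x 1

/-- Prepend the letter `a` to every word of a formal sum. -/
noncomputable def prependLetter (a : Bool) (f : A01) : A01 :=
  Finsupp.mapDomain (List.cons a) f

/-- The shuffle product of two words, as an element of `A`. -/
noncomputable def shuffle : Word → Word → A01
  | [], y => δ y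
  | a :: x, [] => δ (a :: x)
  | a :: x, b :: y =>
      prependLetter a (shuffle x (b :: y)) + prependLetter b (shuffle (a :: x) y)
  termination_by x y => x.length + y.length

/-- The half-shuffle product on basis words: `δ_{a::x} ≺ δ_y = a·(x ш y)`, `δ_[] ≺ δ_y = 0`. -/
noncomputable def halfWord : Word → Word → A01
  | [], _ => 0
  | a :: x, y => prependLetter a (shuffle x y)

/-- The half-shuffle (zinbiel) product `≺` on `A`, extended bilinearly from basis words. -/
noncomputable def half (f g : A01) : A01 :=
  f.sum fun x c => g.sum fun y d => (c * d) • halfWord x y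

/-- The right-parenthesized product `K(a_1, …, a_n) = a_1 ≺ (a_2 ≺ (⋯ ≺ a_n))`,
with `K(a_n) = a_n`, and `δ_[]` (the shuffle unit) for the empty list. -/
noncomputable def Klist : List A01 → A01
  | [] => δ []
  | [a] => a
  | a :: b :: l => half a (Klist (b :: l))

/-- The generators `z_2 = δ_{(1,0)}` and `z_3 = u·δ_{(1,0,0)} + v·δ_{(1,1,0)}`;
letters of the alphabet `{2,3}` are encoded with `false` = `2` and `true` = `3`. -/
noncomputable def zgen (u v : ℚ) : Bool → A01
  | false => δ [true, false]
  | true => u • δ [true, false, false] + v • δ [true, true, false]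

/-- `K_{u,v}(w)` for a word `w` over `{2,3}` (encoded with `false` = `2`, `true` = `3`). -/
noncomputable def Kuv (u v : ℚ) (w : List Bool) : A01 :=
  Klist (w.map (zgen u v))

/-- The block substitution `2 ↦ (1,0)`, `3 ↦ (1,0,0)`. -/
def blocks0 (c : Bool) : Word := if c then [true, false, false] else [true, false]

/-- The block substitution `2 ↦ (1,0)`, `3 ↦ (1,1,0)`. -/
def blocks1 (c : Bool) : Word := if c then [true, true, false] else [true, false]

/-- `cat₀(w)`: substitute `2 ↦ (1,0)`, `3 ↦ (1,0,0)` and concatenate. -/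
def cat0 (w : List Bool) : Word := (w.map blocks0).flatten

/-- `cat₁(w)`: substitute `2 ↦ (1,0)`, `3 ↦ (1,1,0)` and concatenate. -/
def cat1 (w : List Bool) : Word := (w.map blocks1).flatten

/-- A good-shuffle realizing the word `x` from the words `ws = (w^1, …, w^n)`:
a partition `S` of the positions of `x`, reading `x` along `S j` gives `w^j`,
and the minima of the parts are in increasing order. -/
def GoodShuffle (ws : List Word) (x : Word)
    (S : Fin ws.length → Finset (Fin x.length)) : Prop :=
  (∀ p : Fin x.length, ∃! j, p ∈ S j) ∧
  (∀ j, ((S j).sort (· ≤ ·)).map x.get = ws.get j) ∧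
  (∀ j k, j < k → (S j).min < (S k).min)

/-- The weight of a word over `{2,3}`: the sum of its letters. -/
def wt (w : List Bool) : ℕ := (w.map fun c => if c then 3 else 2).sum

/-! ### Auxiliary lemmas -/


def restOf : Bool → Word
  | false => [false]
  | true => [false, false]

lemma blocks0_eq (c : Bool) : blocks0 c = true :: restOf c := by cases c <;> rfl

lemma restOf_eq (c : Bool) : restOf c = List.replicate (cond c 2 1) false := by
  cases c <;> rfl

lemma zgen_eq (c : Bool) : zgen (1 : ℚ) 0 c = δ (true :: restOf c) := by
  cases c <;> simp [zgen, restOf]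

lemma prepend_cons (a : Bool) (f : A01) (t : Word) : prependLetter a f (a :: t) = f t :=
  Finsupp.mapDomain_apply List.cons_injective f t

lemma prepend_nil (a : Bool) (f : A01) : prependLetter a f [] = 0 :=
  Finsupp.mapDomain_notin_range f [] (by rintro ⟨x, hx⟩; simp at hx)

lemma prepend_ne (a b : Bool) (h : b ≠ a) (f : A01) (t : Word) :
    prependLetter a f (b :: t) = 0 :=
  Finsupp.mapDomain_notin_range f (b :: t)
    (by rintro ⟨x, hx⟩; injection hx with h1 h2; exact h h1.symm)

lemma shuffle_nil_left (y : Word) : shuffle [] y = δ y := by rw [shuffle]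

lemma shuffle_nil_right (x : Word) : shuffle x [] = δ x := by
  cases x <;> rw [shuffle]

lemma shuffle_cons_cons (a : Bool) (x : Word) (b : Bool) (y : Word) :
    shuffle (a::x) (b::y) =
      prependLetter a (shuffle x (b::y)) + prependLetter b (shuffle (a::x) y) := by
  rw [shuffle]

lemma shuffle_replicate_apply (k : ℕ) (y z : Word)
    (hy : y = [] ∨ ∃ y', y = true :: y') :
    shuffle (List.replicate k false) y (List.replicate k false ++ z) = δ y z := by
  rcases hy with rfl | ⟨y', rfl⟩
  · rw [shuffle_nil_right]
    simp [δ, Finsupp.single_apply, eq_comm]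
  · induction k generalizing z with
    | zero => simp [shuffle_nil_left]
    | succ n ih =>
      rw [List.replicate_succ, shuffle_cons_cons, List.cons_append,
        Finsupp.add_apply, prepend_cons, prepend_ne true false (by decide),
        ih, add_zero]

lemma shuffle_one_false (y t : Word) (hy : y = [] ∨ ∃ y', y = true :: y') :
    shuffle [false] y (false :: false :: t) = 0 := by
  rcases hy with rfl | ⟨y', rfl⟩
  · rw [shuffle_nil_right]
    simp [δ, Finsupp.single_apply]
  · rw [shuffle_cons_cons, Finsupp.add_apply, prepend_cons,
      prepend_ne true false (by decide), shuffle_nil_left]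
    simp [δ, Finsupp.single_apply]

lemma Kuv_cons (c : Bool) (wr : List Bool) :
    Kuv 1 0 (c :: wr) =
      (Kuv 1 0 wr).sum fun y d => d • prependLetter true (shuffle (restOf c) y) := by
  cases wr with
  | nil =>
    show Klist [zgen 1 0 c] = (δ []).sum _
    rw [δ, Finsupp.sum_single_index (by simp)]
    rw [one_smul, shuffle_nil_right, Klist, zgen_eq, prependLetter]
    simp [δ, Finsupp.mapDomain_single]
  | cons c2 wr2 =>
    show Klist (zgen 1 0 c :: zgen 1 0 c2 :: wr2.map (zgen 1 0)) = _
    rw [Klist, zgen_eq, half, δ, Finsupp.sum_single_index (by simp)]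
    show ((Kuv 1 0 (c2 :: wr2)).sum fun y d => (1 * d) • halfWord (true :: restOf c) y) = _
    simp only [one_mul, halfWord]

lemma Kuv_cons_apply_true (c : Bool) (wr : List Bool) (t : Word) :
    Kuv 1 0 (c :: wr) (true :: t) =
      (Kuv 1 0 wr).sum fun y d => d * shuffle (restOf c) y t := by
  rw [Kuv_cons, Finsupp.sum_apply]
  exact Finsupp.sum_congr fun y hy => by
    rw [Finsupp.smul_apply, prepend_cons, smul_eq_mul]

lemma Kuv_cons_apply_nil (c : Bool) (wr : List Bool) :
    Kuv 1 0 (c :: wr) [] = 0 := by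
  rw [Kuv_cons, Finsupp.sum_apply, Finsupp.sum]
  refine Finset.sum_eq_zero fun y hy => ?_
  rw [Finsupp.smul_apply, prepend_nil, smul_zero]

lemma Kuv_cons_apply_false (c : Bool) (wr : List Bool) (t : Word) :
    Kuv 1 0 (c :: wr) (false :: t) = 0 := by
  rw [Kuv_cons, Finsupp.sum_apply, Finsupp.sum]
  refine Finset.sum_eq_zero fun y hy => ?_
  rw [Finsupp.smul_apply, prepend_ne true false (by decide), smul_zero]

lemma Kuv_struct (w y : List Bool) (h : Kuv 1 0 w y ≠ 0) :
    y = [] ∨ ∃ y', y = true :: y' := by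
  cases w with
  | nil =>
    left
    by_contra hy
    exact h (by simp [Kuv, Klist, δ, Finsupp.single_apply, Ne.symm hy])
  | cons c wr =>
    cases y with
    | nil => exact absurd (Kuv_cons_apply_nil c wr) h
    | cons b t =>
      cases b with
      | false => exact absurd (Kuv_cons_apply_false c wr t) h
      | true => exact Or.inr ⟨t, rfl⟩

lemma Kuv_cons_apply' (c : Bool) (wr : List Bool) (z : Word) :
    Kuv 1 0 (c :: wr) (true :: (restOf c ++ z)) = Kuv 1 0 wr z := by
  rw [Kuv_cons_apply_true, Finsupp.sum]
  have key : ∀ y ∈ (Kuv 1 0 wr).support,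
      (Kuv 1 0 wr) y * shuffle (restOf c) y (restOf c ++ z)
        = if y = z then (Kuv 1 0 wr) y else 0 := by
    intro y hy
    have hs := Kuv_struct wr y (Finsupp.mem_support_iff.mp hy)
    rw [restOf_eq, shuffle_replicate_apply _ _ _ hs, δ, Finsupp.single_apply]
    split <;> simp_all
  rw [Finset.sum_congr rfl key, Finset.sum_ite_eq' _ z]
  by_cases hz : z ∈ (Kuv 1 0 wr).support
  · rw [if_pos hz]
  · rw [if_neg hz, eq_comm]
    exact Finsupp.notMem_support_iff.mp hz

lemma cat0_cons (c : Bool) (w : List Bool) :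
    cat0 (c :: w) = true :: (restOf c ++ cat0 w) := by
  simp [cat0, blocks0_eq c]

lemma Kuv_diag (w : List Bool) : Kuv 1 0 w (cat0 w) = 1 := by
  induction w with
  | nil => simp [Kuv, Klist, δ, cat0]
  | cons c wr ih => rw [cat0_cons, Kuv_cons_apply', ih]

lemma Kuv_offdiag (w w' : List Bool) (h : List.Lex (· < ·) w w') :
    Kuv 1 0 w (cat0 w') = 0 := by
  induction h with
  | nil =>
    rw [cat0_cons]
    simp [Kuv, Klist, δ, Finsupp.single_apply]
  | @rel a l b l' hab =>
    obtain ⟨rfl, rfl⟩ := Bool.lt_iff.mp hab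
    rw [cat0_cons, Kuv_cons_apply_true, Finsupp.sum]
    refine Finset.sum_eq_zero fun y hy => ?_
    have hs := Kuv_struct _ y (Finsupp.mem_support_iff.mp hy)
    rw [show restOf false = [false] from rfl,
      show restOf true ++ cat0 l' = false :: false :: cat0 l' from rfl,
      shuffle_one_false y _ hs, mul_zero]
  | @cons a l l' h ih =>

    rw [cat0_cons, Kuv_cons_apply', ih]



/-- Triangularity for `(u,v) = (1,0)`: for words over `{2,3}` (encoded `false` = `2` <
`true` = `3`) with the same length and the same numbers of `2`'s and `3`'s, if `w` is
lexicographically smaller than `w'` then the coefficient of `δ_{cat₀(w')}` in `K_{1,0}(w)`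
vanishes, while the diagonal coefficient of `δ_{cat₀(w)}` in `K_{1,0}(w)` equals `1`. -/
theorem K10_matrix_triangular :
    (∀ w w' : List Bool, w.length = w'.length → w.count false = w'.count false →
      w.count true = w'.count true → List.Lex (· < ·) w w' →
      (Kuv 1 0 w) (cat0 w') = 0) ∧
    (∀ w : List Bool, (Kuv 1 0 w) (cat0 w) = 1) :=
  ⟨fun w w' _ _ _ h => Kuv_offdiag w w' h, Kuv_diag⟩
end

section
/- Let w and w' be words over {2,3} of the same length n with the same number of 2's and 3's, ordered lexicographically with 2 < 3. If w' is strictly smaller than w in lexicographic order, then the coefficient of δ_{cat₁(w')} in K_{0,1}(w) is zero. Moreover, for every word w over {2,3}, the coefficient of δ_{cat₁(w)} in K_{0,1}(w) is a strictly positive integer (the identity partition is always a good-shuffle realizing cat₁(w) from its own blocks). Hence the matrix of these coefficients, over all words with fixed numbers of 2's and 3's, is triangular with nonzero diagonal. -/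
namespace KP

/-! ### Lex order helpers -/

def lle (x y : Word) : Prop := List.Lex (· < ·) x y ∨ x = y

lemma lle_refl (x : Word) : lle x x := Or.inr rfl

lemma lle_cons (a : Bool) {x y : Word} (h : lle x y) : lle (a :: x) (a :: y) :=
  h.elim (fun h => Or.inl (List.Lex.cons h)) (fun h => Or.inr (by rw [h]))

lemma lex_of_lex_of_lle {x y z : Word} (h : List.Lex (· < ·) x y) (h2 : lle y z) :
    List.Lex (· < ·) x z :=
  h2.elim (fun h2 => List.lex_trans (fun h1 h2 => lt_trans h1 h2) h h2) (fun h2 => h2 ▸ h)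

lemma lle_trans {x y z : Word} (h : lle x y) (h2 : lle y z) : lle x z :=
  h.elim (fun h => Or.inl (lex_of_lex_of_lle h h2)) (fun h => h ▸ h2)

lemma lex_irrefl : ∀ x : Word, ¬ List.Lex (· < ·) x x := by
  intro x
  induction x with
  | nil => intro h; cases h
  | cons a x ih =>
    intro h
    cases h with
    | cons h => exact ih h
    | rel h => exact absurd h (by simp [Bool.lt_iff])

lemma lle_not_lex {x y : Word} (h : lle x y) (h2 : List.Lex (· < ·) y x) : False :=
  lex_irrefl y (lex_of_lex_of_lle h2 h)

lemma not_lt_true {b : Bool} : ¬ (true < b) := by simp [Bool.lt_iff]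

lemma not_lt_false' {b : Bool} : ¬ (b < false) := by simp [Bool.lt_iff]

lemma lle_false_true {x y : Word} : lle (false :: x) (true :: y) :=
  Or.inl (List.Lex.rel (by simp [Bool.lt_iff]))

lemma lle_true_cons {x y : Word} {b : Bool} (h : lle (true :: x) (b :: y)) :
    b = true ∧ lle x y := by
  rcases h with h | h
  · cases h with
    | cons h => exact ⟨rfl, Or.inl h⟩
    | rel h => exact absurd h not_lt_true
  · injection h with h1 h2
    exact ⟨h1.symm, Or.inr h2⟩

lemma lle_cons_false {x y : Word} {c : Bool} (h : lle (c :: x) (false :: y)) :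
    c = false ∧ lle x y := by
  rcases h with h | h
  · cases h with
    | cons h => exact ⟨rfl, Or.inl h⟩
    | rel h => exact absurd h not_lt_false'
  · injection h with h1 h2
    exact ⟨h1, Or.inr h2⟩

lemma lex_append_left (s : Word) {x y : Word} (h : List.Lex (· < ·) x y) :
    List.Lex (· < ·) (s ++ x) (s ++ y) := by
  induction s with
  | nil => exact h
  | cons a s ih => exact List.Lex.cons ih

/-! ### Finsupp helpers -/

lemma prepend_apply_cons (a : Bool) (f : A01) (l : Word) :
    prependLetter a f (a :: l) = f l :=
  Finsupp.mapDomain_apply (fun u v h => by injection h) f l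

lemma mem_supp_prepend {a : Bool} {f : A01} {x : Word}
    (h : x ∈ (prependLetter a f).support) : ∃ t ∈ f.support, x = a :: t := by
  have := Finsupp.mapDomain_support h
  rcases Finset.mem_image.1 this with ⟨t, ht, rfl⟩
  exact ⟨t, ht, rfl⟩

lemma prepend_delta (a : Bool) (l : Word) : prependLetter a (δ l) = δ (a :: l) := by
  unfold prependLetter δ
  rw [Finsupp.mapDomain_single]

lemma mem_supp_delta {x y : Word} (h : x ∈ (δ y).support) : x = y := by
  unfold δ at h
  rcases Finset.mem_singleton.1 (Finsupp.support_single_subset h) with h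
  exact h

lemma delta_self (y : Word) : δ y y = 1 := by simp [δ]

/-! ### lengths in shuffle supports -/

lemma shuffle_supp_length : ∀ x y : Word, ∀ z ∈ (shuffle x y).support,
    z.length = x.length + y.length := by
  apply shuffle.induct
  · intro y z hz
    rw [shuffle] at hz
    simp [mem_supp_delta hz]
  · intro a x z hz
    rw [shuffle] at hz
    simp [mem_supp_delta hz]
  · intro a x b y ih1 ih2 z hz
    rw [shuffle] at hz
    rcases Finset.mem_union.1 (Finsupp.support_add hz) with hz | hz
    · rcases mem_supp_prepend hz with ⟨t, ht, rfl⟩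
      have := ih1 t ht
      simp at this ⊢; omega
    · rcases mem_supp_prepend hz with ⟨t, ht, rfl⟩
      have := ih2 t ht
      simp at this ⊢; omega

/-! ### insert-0 lemma -/

lemma insert0 : ∀ y : Word, ∀ z ∈ (shuffle [false] y).support, lle (false :: y) z := by
  intro y
  induction y with
  | nil =>
    intro z hz
    rw [shuffle] at hz
    rw [mem_supp_delta hz]
    exact lle_refl _
  | cons b y' ih =>
    intro z hz
    rw [shuffle] at hz
    rcases Finset.mem_union.1 (Finsupp.support_add hz) with hz | hz
    · rcases mem_supp_prepend hz with ⟨t, ht, rfl⟩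
      rw [shuffle] at ht
      rw [mem_supp_delta ht]
      exact lle_refl _
    · rcases mem_supp_prepend hz with ⟨t, ht, rfl⟩
      have h' := ih t ht
      cases b with
      | false => exact lle_cons false h'
      | true => exact lle_false_true


/-! ### the key lemma S1 -/

def tail1 (a : Bool) : Word := if a then [true, false] else [false]

lemma blocks1_eq_cons (a : Bool) : blocks1 a = true :: tail1 a := by
  cases a <;> rfl

lemma cat1_nil : cat1 [] = [] := rfl

lemma cat1_cons (a : Bool) (w : List Bool) :
    cat1 (a :: w) = true :: (tail1 a ++ cat1 w) := by
  show (blocks1 a ++ cat1 w : Word) = _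
  rw [blocks1_eq_cons]
  rfl

lemma S1 : ∀ n : ℕ, ∀ y : Word, ∀ v : List Bool, y.length = n →
    (cat1 v).length = n → lle (cat1 v) y →
    ∀ z ∈ (shuffle [true, false] y).support, lle (true :: false :: cat1 v) z := by
  intro n
  induction n using Nat.strong_induction_on with
  | _ n IH =>
    intro y v hy hv hle z hz
    cases v with
    | nil =>
      have hy0 : y = [] := List.length_eq_zero_iff.1 (by rw [hy, ← hv]; rfl)
      subst hy0
      rw [shuffle] at hz
      rw [mem_supp_delta hz]
      exact lle_refl _
    | cons a v₀ =>
      rw [cat1_cons] at hv hle ⊢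
      -- y is nonempty and starts with true
      cases y with
      | nil => simp at hy hv; omega
      | cons c y₀ =>
        obtain ⟨rfl, hle₀⟩ := lle_true_cons hle
        rw [shuffle] at hz
        rcases Finset.mem_union.1 (Finsupp.support_add hz) with hz | hz
        · -- z = true :: z₁ with z₁ ∈ supp (shuffle [false] (true :: y₀))
          rcases mem_supp_prepend hz with ⟨z₁, hz₁, rfl⟩
          have h1 : lle (false :: true :: y₀) z₁ := insert0 _ _ hz₁
          refine lle_cons true (lle_trans ?_ h1)
          exact lle_cons false (lle_cons true hle₀)
        · -- z = true :: z₁ with z₁ ∈ supp (shuffle [true,false] y₀)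
          rcases mem_supp_prepend hz with ⟨z₁, hz₁, rfl⟩
          refine lle_cons true ?_
          -- goal : lle (false :: true :: (tail1 a ++ cat1 v₀)) z₁
          -- z₁ has length ≥ 2
          cases y₀ with
          | nil =>
            rw [shuffle] at hz₁
            rw [mem_supp_delta hz₁]
            exact lle_false_true
          | cons e y₁ =>
            rw [shuffle] at hz₁
            rcases Finset.mem_union.1 (Finsupp.support_add hz₁) with hz₁ | hz₁
            · rcases mem_supp_prepend hz₁ with ⟨z₂, _, rfl⟩
              exact lle_false_true
            · rcases mem_supp_prepend hz₁ with ⟨z₂, hz₂, rfl⟩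
              cases e with
              | true => exact lle_false_true
              | false =>
                -- y₀ = false :: y₁, so tail1 a ++ cat1 v₀ starts with false, forcing a = false
                cases a with
                | true =>
                  exfalso
                  have h' : lle (true :: (false :: cat1 v₀)) (false :: y₁) := hle₀
                  rcases h' with h | h
                  · cases h with
                    | rel h => exact absurd h not_lt_true
                  · exact absurd h (by simp)
                | false =>
                  obtain ⟨-, hle₁⟩ := lle_cons_false (x := cat1 v₀) (y := y₁) hle₀
                  refine lle_cons false ?_
                  -- goal : lle (true :: (cat1 v₀ ... )) z₂ ; note tail1 false ++ m = false :: m was consumed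
                  have hn : (cat1 v₀).length + 2 = n := by
                    simp [tail1] at hv; omega
                  have hlen : y₁.length = (cat1 v₀).length := by
                    simp at hy; omega
                  exact IH (cat1 v₀).length (by omega) y₁ v₀ hlen rfl hle₁ z₂ hz₂

/-! ### unfolding Kuv 0 1 -/

lemma zgen01 (a : Bool) : zgen 0 1 a = δ (blocks1 a) := by
  cases a <;> simp [zgen, blocks1]

lemma half_delta (b : Word) (g : A01) :
    half (δ b) g = g.sum fun y d => d • halfWord b y := by
  unfold half δ
  rw [Finsupp.sum_single_index]
  · simp
  · simp [Finsupp.sum]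

lemma half_delta_apply (b : Word) (g : A01) (x : Word) :
    half (δ b) g x = ∑ y ∈ g.support, g y * halfWord b y x := by
  rw [half_delta, Finsupp.sum_apply]
  simp [Finsupp.sum, Finsupp.smul_apply]

lemma halfWord_blocks1 (a : Bool) (y : Word) :
    halfWord (blocks1 a) y = prependLetter true (shuffle (tail1 a) y) := by
  rw [blocks1_eq_cons]; rfl

lemma Kuv01_cons (a : Bool) (w : List Bool) :
    Kuv 0 1 (a :: w) = half (δ (blocks1 a)) (Kuv 0 1 w) := by
  cases w with
  | nil =>
    show Klist [zgen 0 1 a] = half (δ (blocks1 a)) (Klist [])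
    rw [zgen01]
    show δ (blocks1 a) = half (δ (blocks1 a)) (δ [])
    rw [half_delta]
    unfold δ
    rw [Finsupp.sum_single_index]
    · rw [one_smul, halfWord_blocks1]
      cases a with
      | false =>
        show δ [true, false] = prependLetter true (shuffle [false] [])
        rw [shuffle, prepend_delta]
      | true =>
        show δ [true, true, false] = prependLetter true (shuffle [true, false] [])
        rw [shuffle, prepend_delta]
    · rw [zero_smul]
  | cons c w' =>
    show Klist (zgen 0 1 a :: zgen 0 1 c :: _) = _
    rw [Klist, zgen01]
    rfl

/-! ### main support lemma -/

lemma M : ∀ w : List Bool, ∀ y ∈ (Kuv 0 1 w).support,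
    y.length = (cat1 w).length ∧ lle (cat1 w) y := by
  intro w
  induction w with
  | nil =>
    intro y hy
    have : y = [] := mem_supp_delta hy
    subst this
    exact ⟨rfl, lle_refl _⟩
  | cons a w₀ ih =>
    intro y hy
    rw [Kuv01_cons, half_delta] at hy
    have hy' := Finsupp.support_sum hy
    rcases Finset.mem_biUnion.1 hy' with ⟨y₀, hy₀, hmem⟩
    have hmem' : y ∈ (halfWord (blocks1 a) y₀).support := Finsupp.support_smul hmem
    rw [halfWord_blocks1] at hmem'
    rcases mem_supp_prepend hmem' with ⟨z, hz, rfl⟩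
    obtain ⟨hlen₀, hle₀⟩ := ih y₀ hy₀
    have hzlen := shuffle_supp_length (tail1 a) y₀ z hz
    constructor
    · rw [cat1_cons]
      simp only [List.length_cons, List.length_append] at hzlen ⊢
      omega
    · rw [cat1_cons]
      cases a with
      | false =>
        have h1 : lle (false :: y₀) z := insert0 y₀ z (by exact hz)
        refine lle_cons true (lle_trans ?_ h1)
        show lle (false :: cat1 w₀) (false :: y₀)
        exact lle_cons false hle₀
      | true =>
        refine lle_cons true ?_
        show lle (true :: false :: cat1 w₀) z
        exact S1 y₀.length y₀ w₀ rfl hlen₀.symm hle₀ z (by exact hz)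

/-! ### monotonicity of cat1 -/

lemma cat1_mono : ∀ {w' w : List Bool}, List.Lex (· < ·) w' w →
    w'.length = w.length → List.Lex (· < ·) (cat1 w') (cat1 w) := by
  intro w' w h
  induction h with
  | nil => intro hl; simp at hl
  | @cons a l₁ l₂ h ih =>
    intro hl
    simp at hl
    show List.Lex _ (blocks1 a ++ cat1 l₁) (blocks1 a ++ cat1 l₂)
    exact lex_append_left _ (ih hl)
  | @rel a l₁ b l₂ h =>
    intro _
    rw [Bool.lt_iff] at h
    obtain ⟨rfl, rfl⟩ := h
    rw [cat1_cons, cat1_cons]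
    show List.Lex _ (true :: false :: cat1 l₁) (true :: true :: (false :: cat1 l₂))
    exact List.Lex.cons (List.Lex.rel (by decide))

/-! ### natural coefficients -/

def NN (f : A01) : Prop := ∀ x, ∃ k : ℕ, f x = (k : ℚ)

lemma NN.nonneg {f : A01} (h : NN f) (x : Word) : 0 ≤ f x := by
  rcases h x with ⟨k, hk⟩; rw [hk]; positivity

lemma NN_delta (y : Word) : NN (δ y) := by
  intro x
  unfold δ
  rw [Finsupp.single_apply]
  by_cases h : y = x
  · exact ⟨1, by simp [h]⟩
  · exact ⟨0, by simp [h]⟩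

lemma NN_add {f g : A01} (hf : NN f) (hg : NN g) : NN (f + g) := fun x => by
  rcases hf x with ⟨k, hk⟩; rcases hg x with ⟨j, hj⟩
  exact ⟨k + j, by rw [Finsupp.add_apply, hk, hj]; push_cast; ring⟩

lemma NN_prepend {f : A01} (a : Bool) (hf : NN f) : NN (prependLetter a f) := by
  intro x
  cases x with
  | nil =>
    refine ⟨0, ?_⟩
    rw [Nat.cast_zero, ← Finsupp.notMem_support_iff]
    intro h
    rcases mem_supp_prepend h with ⟨t, _, ht⟩
    simp at ht
  | cons b l =>
    by_cases hb : b = a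
    · subst hb; rw [prepend_apply_cons]; exact hf l
    · refine ⟨0, ?_⟩
      rw [Nat.cast_zero, ← Finsupp.notMem_support_iff]
      intro h
      rcases mem_supp_prepend h with ⟨t, _, ht⟩
      injection ht with h1 _
      exact hb h1

lemma NN_shuffle : ∀ x y : Word, NN (shuffle x y) := by
  apply shuffle.induct
  · intro y; rw [shuffle]; exact NN_delta y
  · intro a x; rw [shuffle]; exact NN_delta _
  · intro a x b y ih1 ih2
    rw [shuffle]
    exact NN_add (NN_prepend a ih1) (NN_prepend b ih2)

lemma NN_halfWord (b y : Word) : NN (halfWord b y) := by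
  cases b with
  | nil => intro x; exact ⟨0, by simp [halfWord]⟩
  | cons c t => exact NN_prepend c (NN_shuffle t y)

lemma natsum {α : Type*} (s : Finset α) (f : α → ℚ)
    (h : ∀ i ∈ s, ∃ k : ℕ, f i = (k : ℚ)) :
    ∃ k : ℕ, ∑ i ∈ s, f i = (k : ℚ) := by
  classical
  induction s using Finset.induction_on with
  | empty => exact ⟨0, by simp⟩
  | @insert a s ha ih =>
    rcases h a (Finset.mem_insert_self a s) with ⟨k, hk⟩
    rcases ih (fun i hi => h i (Finset.mem_insert_of_mem hi)) with ⟨j, hj⟩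
    exact ⟨k + j, by rw [Finset.sum_insert ha, hk, hj]; push_cast; ring⟩

lemma NN_K : ∀ w : List Bool, NN (Kuv 0 1 w) := by
  intro w
  induction w with
  | nil => exact NN_delta []
  | cons a w₀ ih =>
    intro x
    rw [Kuv01_cons, half_delta_apply]
    refine natsum _ _ fun y hy => ?_
    rcases ih y with ⟨k, hk⟩
    rcases NN_halfWord (blocks1 a) y x with ⟨j, hj⟩
    exact ⟨k * j, by rw [hk, hj]; push_cast; ring⟩

lemma shuffle_ge_one : ∀ x y : Word, 1 ≤ shuffle x y (x ++ y) := by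
  apply shuffle.induct
  · intro y
    rw [shuffle]
    show (1 : ℚ) ≤ δ y y
    rw [delta_self]
  · intro a x
    rw [shuffle, List.append_nil]
    show (1 : ℚ) ≤ δ (a :: x) (a :: x)
    rw [delta_self]
  · intro a x b y ih1 ih2
    rw [shuffle]
    show (1 : ℚ) ≤ (_ + _ : A01) (a :: (x ++ b :: y))
    rw [Finsupp.add_apply, prepend_apply_cons]
    have h2 : 0 ≤ prependLetter b (shuffle (a :: x) y) (a :: (x ++ b :: y)) :=
      (NN_prepend b (NN_shuffle (a :: x) y)).nonneg _
    linarith [ih1]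

lemma diag : ∀ w : List Bool, 1 ≤ (Kuv 0 1 w) (cat1 w) := by
  intro w
  induction w with
  | nil =>
    show (1 : ℚ) ≤ δ [] []
    rw [delta_self]
  | cons a w₀ ih =>
    rw [Kuv01_cons, half_delta_apply]
    set g := Kuv 0 1 w₀ with hg
    have hmem : cat1 w₀ ∈ g.support := Finsupp.mem_support_iff.2 (by linarith [ih])
    have hval : halfWord (blocks1 a) (cat1 w₀) (cat1 (a :: w₀)) =
        shuffle (tail1 a) (cat1 w₀) (tail1 a ++ cat1 w₀) := by
      rw [halfWord_blocks1, cat1_cons, prepend_apply_cons]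
    have hterm : 1 ≤ g (cat1 w₀) * halfWord (blocks1 a) (cat1 w₀) (cat1 (a :: w₀)) := by
      rw [hval]
      nlinarith [ih, shuffle_ge_one (tail1 a) (cat1 w₀)]
    refine le_trans hterm (Finset.single_le_sum (f := fun y => g y * halfWord (blocks1 a) y (cat1 (a :: w₀))) ?_ hmem)
    intro i _
    exact mul_nonneg ((NN_K w₀).nonneg i) ((NN_halfWord (blocks1 a) i).nonneg _)

end KP

/-- Triangularity for `(u,v) = (0,1)`: for words over `{2,3}` (encoded `false` = `2` <
`true` = `3`) with the same length and the same numbers of `2`'s and `3`'s, if `w'` is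
lexicographically smaller than `w` then the coefficient of `δ_{cat₁(w')}` in `K_{0,1}(w)`
vanishes, while the diagonal coefficient of `δ_{cat₁(w)}` in `K_{0,1}(w)` is a strictly
positive integer. -/
theorem K01_matrix_triangular :
    (∀ w w' : List Bool, w.length = w'.length → w.count false = w'.count false →
      w.count true = w'.count true → List.Lex (· < ·) w' w →
      (Kuv 0 1 w) (cat1 w') = 0) ∧
    (∀ w : List Bool, ∃ m : ℕ, 0 < m ∧ (Kuv 0 1 w) (cat1 w) = (m : ℚ)) := by
  constructor
  · intro w w' hlen _ _ hlex
    have hmono := KP.cat1_mono hlex hlen.symm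
    by_contra h
    have hmem : cat1 w' ∈ (Kuv 0 1 w).support := Finsupp.mem_support_iff.2 h
    exact KP.lle_not_lex (KP.M w (cat1 w') hmem).2 hmono
  · intro w
    rcases KP.NN_K w (cat1 w) with ⟨k, hk⟩
    have h1 := KP.diag w
    rw [hk] at h1
    have h2 : 1 ≤ k := by exact_mod_cast h1
    exact ⟨k, by omega, hk⟩
end

section
/- Let w be a word over {2,3} and factor w uniquely as w = 2^a b^{(1)} b^{(2)} ⋯ b^{(m)}, where 2^a is the (possibly empty) maximal initial run of 2's and each block b^{(t)} has the form 3 2^{r_t} (a single letter 3 followed by r_t ≥ 0 letters 2). Then the coefficient of δ_{cat₁(w)} in K_{0,1}(w) — equivalently, the number of good-shuffles realizing cat₁(w) from its own blocks — equals the product ∏_{t=1}^{m} (r_t + 1). For example, for w = (2, 3, 3, 2, 3, 2) this coefficient is 1 × 2 × 2 = 4. -/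
namespace K01

/-! ### Basic application lemmas -/

lemma delta_apply (x t : Word) : δ x t = if x = t then (1:ℚ) else 0 :=
  Finsupp.single_apply

lemma prepend_cons (a : Bool) (f : A01) (t : Word) :
    prependLetter a f (a::t) = f t := by
  simpa [prependLetter] using Finsupp.mapDomain_apply (List.cons_injective) f t

lemma prepend_nil (a : Bool) (f : A01) : prependLetter a f [] = 0 := by
  rw [prependLetter, Finsupp.mapDomain_notin_range]; simp

lemma prepend_ne (a b : Bool) (hab : a ≠ b) (f : A01) (t : Word) :
    prependLetter a f (b::t) = 0 := by
  rw [prependLetter, Finsupp.mapDomain_notin_range]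
  simp only [Set.mem_range, not_exists]
  intro x h
  exact hab (List.cons.injEq .. ▸ h).1

lemma prepend_ne_zero {a : Bool} {f : A01} {t : Word}
    (h : prependLetter a f t ≠ 0) : ∃ t', t = a::t' ∧ f t' ≠ 0 := by
  rcases t with _ | ⟨b, t'⟩
  · exact absurd (prepend_nil a f) h
  · by_cases hb : a = b
    · subst hb; exact ⟨t', rfl, by rwa [prepend_cons] at h⟩
    · exact absurd (prepend_ne a b hb f t') h

lemma add_ne_zero {f g : A01} {t : Word} (h : (f + g) t ≠ 0) :
    f t ≠ 0 ∨ g t ≠ 0 := by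
  by_contra hc
  push_neg at hc
  simp [Finsupp.add_apply, hc.1, hc.2] at h

lemma delta_ne_zero {x t : Word} (h : δ x t ≠ 0) : t = x := by
  rw [delta_apply] at h
  by_contra hc
  rw [if_neg (fun h' => hc h'.symm)] at h
  exact h rfl

/-! ### shuffle equations -/

lemma shuffle_nil_left (y : Word) : shuffle [] y = δ y := by rw [shuffle]

lemma shuffle_nil_right (a : Bool) (x : Word) : shuffle (a::x) [] = δ (a::x) := by
  rw [shuffle]

lemma shuffle_cons (a b : Bool) (x y : Word) :
    shuffle (a::x) (b::y) =
      prependLetter a (shuffle x (b::y)) + prependLetter b (shuffle (a::x) y) := by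
  rw [shuffle]

lemma shuffle_length : ∀ (x y t : Word), shuffle x y t ≠ 0 →
    t.length = x.length + y.length
  | [], y, t, h => by
      rw [shuffle_nil_left] at h
      simp [delta_ne_zero h]
  | a::x, [], t, h => by
      rw [shuffle_nil_right] at h
      simp [delta_ne_zero h]
  | a::x, b::y, t, h => by
      rw [shuffle_cons] at h
      rcases add_ne_zero h with h' | h'
      · obtain ⟨t', rfl, h''⟩ := prepend_ne_zero h'
        have := shuffle_length x (b::y) t' h''
        simp [this]; omega
      · obtain ⟨t', rfl, h''⟩ := prepend_ne_zero h'
        have := shuffle_length (a::x) y t' h''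
        simp [this]; omega
  termination_by x y => x.length + y.length

/-! ### pointwise evaluation lemmas -/

lemma eval0 (y1 c : Word) :
    shuffle [false] (true::y1) (false::c) = if c = true::y1 then (1:ℚ) else 0 := by
  rw [shuffle_cons, Finsupp.add_apply, prepend_cons,
      prepend_ne true false (by simp), shuffle_nil_left, delta_apply, add_zero]
  exact if_congr eq_comm rfl rfl

lemma sh10_nil (t : Word) : shuffle [true,false] [] (false::t) = 0 := by
  rw [shuffle_nil_right, delta_apply]
  simp

lemma sh10_true (u t : Word) : shuffle [true,false] (true::u) (false::t) = 0 := by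
  rw [shuffle_cons, Finsupp.add_apply,
      prepend_ne true false (by simp), prepend_ne true false (by simp)]
  simp

lemma sh10_false (u t : Word) :
    shuffle [true,false] (false::u) (false::t) = shuffle [true,false] u t := by
  rw [shuffle_cons, Finsupp.add_apply, prepend_ne true false (by simp), prepend_cons]
  simp

/-! ### the order `LeW` and support predicate -/

def LeW : Word → Word → Prop
  | [], _ => True
  | _::_, [] => False
  | a::c, b::y => (a = false ∧ b = true) ∨ (a = b ∧ LeW c y)

lemma LeW_cons (a b : Bool) (c y : Word) :
    LeW (a::c) (b::y) ↔ (a = false ∧ b = true) ∨ (a = b ∧ LeW c y) := by rw [LeW]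

lemma LeW_refl : ∀ x : Word, LeW x x := by
  intro x; induction x <;> simp [LeW, *]

lemma LeW_true_cons {c1 y : Word} (h : LeW (true::c1) y) :
    ∃ y1, y = true::y1 ∧ LeW c1 y1 := by
  rcases y with _ | ⟨b, y1⟩
  · rw [LeW] at h; exact h.elim
  · rw [LeW_cons] at h
    rcases h with ⟨h1, _⟩ | ⟨h1, h2⟩
    · exact absurd h1 (by simp)
    · exact ⟨y1, by rw [← h1], h2⟩

/-- The support predicate. -/
def SP (w : List Bool) (y : Word) : Prop :=
  y.length = (cat1 w).length ∧ LeW (cat1 w) y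

lemma cat1_false (w : List Bool) : cat1 (false::w) = true::false::cat1 w := rfl
lemma cat1_true (w : List Bool) : cat1 (true::w) = true::true::false::cat1 w := rfl

lemma cat1_head : ∀ (c : Bool) (w : List Bool), ∃ u, cat1 (c::w) = true::u ∧ 2 ≤ (cat1 (c::w)).length := by
  intro c w
  cases c
  · exact ⟨_, cat1_false w, by rw [cat1_false]; simp⟩
  · exact ⟨_, cat1_true w, by rw [cat1_true]; simp⟩

lemma SP_shape {c : Bool} {w : List Bool} {y : Word} (h : SP (c::w) y) :
    ∃ y1, y = true::y1 ∧ LeW (cat1 (c::w)).tail y1 := by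
  obtain ⟨u, hu, _⟩ := cat1_head c w
  have h2 := h.2
  rw [hu] at h2
  obtain ⟨y1, rfl, h3⟩ := LeW_true_cons h2
  exact ⟨y1, rfl, by rw [hu]; exact h3⟩

/-! ### insertion lemmas -/

lemma ins0 (w : List Bool) (y s : Word) (hsp : SP w y)
    (h : shuffle [false] y s ≠ 0) : LeW (false::cat1 w) s := by
  rcases w with _ | ⟨c, w'⟩
  · have hy : y = [] := by simpa [List.length_eq_zero_iff, cat1] using hsp.1
    subst hy
    rw [shuffle_nil_right] at h
    rw [delta_ne_zero h]
    show LeW (false::cat1 []) [false]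
    simp [cat1, LeW]
  · obtain ⟨y1, rfl, hle⟩ := SP_shape hsp
    rw [shuffle_cons] at h
    rcases add_ne_zero h with h' | h'
    · obtain ⟨s1, rfl, h''⟩ := prepend_ne_zero h'
      rw [shuffle_nil_left] at h''
      rw [delta_ne_zero h'']
      rw [LeW_cons]
      right
      obtain ⟨u, hu, _⟩ := cat1_head c w'
      refine ⟨rfl, ?_⟩
      rw [hu, LeW_cons]
      right
      rw [hu] at hle
      exact ⟨rfl, hle⟩
    · obtain ⟨s1, rfl, _⟩ := prepend_ne_zero h'
      rw [LeW_cons]; left; exact ⟨rfl, rfl⟩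

lemma ins1 : ∀ (w : List Bool) (y s : Word), SP w y →
    shuffle [true,false] y s ≠ 0 → LeW (true::false::cat1 w) s := by
  intro w
  induction w with
  | nil =>
      intro y s hsp h
      have hy : y = [] := by simpa [List.length_eq_zero_iff, cat1] using hsp.1
      subst hy
      rw [shuffle_nil_right] at h
      rw [delta_ne_zero h]
      exact LeW_refl _
  | cons c0 w1 ih =>
      intro y s hsp h
      obtain ⟨y1, rfl, hle⟩ := SP_shape hsp
      rw [shuffle_cons] at h
      rcases add_ne_zero h with h' | h'
      · obtain ⟨s1, rfl, h''⟩ := prepend_ne_zero h'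
        rw [LeW_cons]; right
        exact ⟨rfl, ins0 (c0::w1) (true::y1) s1 hsp h''⟩
      · obtain ⟨s1, rfl, h''⟩ := prepend_ne_zero h'
        rw [LeW_cons]; right
        refine ⟨rfl, ?_⟩
        -- goal : LeW (false :: cat1 (c0::w1)) s1, h'' : shuffle [true,false] y1 s1 ≠ 0
        rcases y1 with _ | ⟨b1, y2⟩
        · rw [shuffle_nil_right] at h''
          rw [delta_ne_zero h'', LeW_cons]
          left; exact ⟨rfl, rfl⟩
        cases b1
        · -- y1 = false :: y2
          rcases s1 with _ | ⟨e, s2⟩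
          · have := shuffle_length _ _ _ h''
            simp at this
          cases e
          · -- s1 = false :: s2
            rw [sh10_false] at h''
            -- derive c0 = false and peel hle
            cases c0
            · rw [cat1_false] at hle ⊢
              simp only [List.tail_cons] at hle
              simp [LeW_cons] at hle
              -- hle : LeW (cat1 w1) y2
              have hlen : y2.length = (cat1 w1).length := by
                have := hsp.1
                rw [cat1_false] at this
                simpa using this
              have := ih y2 s2 ⟨hlen, hle⟩ h''
              rw [LeW_cons]; right
              exact ⟨rfl, this⟩
            · rw [cat1_true] at hle
              simp only [List.tail_cons] at hle
              simp [LeW_cons] at hle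
          · -- s1 = true :: s2
            rw [LeW_cons]; left; exact ⟨rfl, rfl⟩
        · -- y1 = true :: y2 : s1 must start with true
          rw [shuffle_cons] at h''
          rcases add_ne_zero h'' with h3 | h3 <;>
            · obtain ⟨s2, rfl, _⟩ := prepend_ne_zero h3
              rw [LeW_cons]; left; exact ⟨rfl, rfl⟩


/-! ### lead2 -/

def lead2 : List Bool → ℕ
  | [] => 0
  | true::_ => 0
  | false::w => lead2 w + 1

lemma lead2_nil : lead2 [] = 0 := rfl
lemma lead2_true (w : List Bool) : lead2 (true::w) = 0 := rfl
lemma lead2_false (w : List Bool) : lead2 (false::w) = lead2 w + 1 := by rw [lead2]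

lemma lead2_rep (r : ℕ) (z : List Bool) :
    lead2 (List.replicate r false ++ z) = r + lead2 z := by
  induction r with
  | zero => simp
  | succ n ih => rw [List.replicate_succ, List.cons_append, lead2_false, ih]; ring

lemma lead2_flat (rs : List ℕ) :
    lead2 ((rs.map fun r => true :: List.replicate r false).flatten) = 0 := by
  cases rs with
  | nil => rfl
  | cons r rs' => rw [List.map_cons, List.flatten_cons, List.cons_append, lead2_true]

lemma flat_eq_nil {rs : List ℕ}
    (h : (rs.map fun r => true :: List.replicate r false).flatten = []) : rs = [] := by
  cases rs with
  | nil => rfl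
  | cons r rs' => simp [List.flatten_cons] at h

/-! ### algebra plumbing -/

lemma zgen01 (c : Bool) : zgen 0 1 c = δ (blocks1 c) := by
  cases c <;> simp [zgen, blocks1]

lemma blocks1_eq (c : Bool) :
    blocks1 c = true :: (if c then [true, false] else [false]) := by
  cases c <;> rfl

lemma cat1_single (c : Bool) : cat1 [c] = blocks1 c := by simp [cat1]

lemma half_single (a : Bool) (x : Word) (g : A01) :
    half (δ (a::x)) g = g.sum fun y d => d • prependLetter a (shuffle x y) := by
  rw [half, δ, Finsupp.sum_single_index]
  · simp [halfWord]
  · simp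

lemma Kuv_cons (c : Bool) (w : List Bool) (hw : w ≠ []) :
    Kuv 0 1 (c::w) = half (zgen 0 1 c) (Kuv 0 1 w) := by
  obtain ⟨c1, w2, rfl⟩ := List.exists_cons_of_ne_nil hw
  rw [Kuv, List.map_cons, List.map_cons, Klist]
  rfl

lemma K_apply (c : Bool) (w : List Bool) (hw : w ≠ []) (t : Word) :
    Kuv 0 1 (c::w) (true::t)
      = (Kuv 0 1 w).sum fun y d =>
          d * shuffle (if c then [true,false] else [false]) y t := by
  rw [Kuv_cons c w hw, zgen01, blocks1_eq, half_single, Finsupp.sum_apply]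
  apply Finsupp.sum_congr
  intro y _
  rw [Finsupp.smul_apply, prepend_cons, smul_eq_mul]

lemma K_apply_false (w : List Bool) (hw : w ≠ []) (t : Word) :
    Kuv 0 1 (false::w) (true::t)
      = (Kuv 0 1 w).sum fun y d => d * shuffle [false] y t := by
  rw [K_apply false w hw t]
  norm_num

lemma K_apply_true (w : List Bool) (hw : w ≠ []) (t : Word) :
    Kuv 0 1 (true::w) (true::t)
      = (Kuv 0 1 w).sum fun y d => d * shuffle [true,false] y t := by
  rw [K_apply true w hw t]
  norm_num

lemma sum_delta (f : A01) (c : Word) (A : ℚ) :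
    (f.sum fun y d => if y = c then d * A else 0) = f c * A := by
  rw [Finsupp.sum_ite_eq' f c (fun _ v => v * A)]
  by_cases h : c ∈ f.support
  · rw [if_pos h]
  · rw [if_neg h, Finsupp.notMem_support_iff.mp h]
    ring

/-! ### support lemma -/

lemma supp_lemma : ∀ (w : List Bool) (y : Word), Kuv 0 1 w y ≠ 0 → SP w y := by
  intro w
  induction w with
  | nil =>
      intro y h
      rw [Kuv, List.map_nil, Klist] at h
      have hy := delta_ne_zero h
      subst hy
      exact ⟨rfl, trivial⟩
  | cons c w' ih =>
      intro y h
      rcases w' with _ | ⟨c1, w2⟩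
      · rw [Kuv, List.map_cons, List.map_nil, Klist, zgen01] at h
        have hy := delta_ne_zero h
        subst hy
        refine ⟨by rw [cat1_single], ?_⟩
        rw [cat1_single]
        exact LeW_refl _
      · rw [Kuv_cons c (c1::w2) (by simp), zgen01, blocks1_eq, half_single,
            Finsupp.sum_apply, Finsupp.sum] at h
        obtain ⟨y', hy'supp, hterm⟩ := Finset.exists_ne_zero_of_sum_ne_zero h
        rw [Finsupp.smul_apply, smul_eq_mul] at hterm
        have h1 : Kuv 0 1 (c1::w2) y' ≠ 0 := left_ne_zero_of_mul hterm
        have h2 := right_ne_zero_of_mul hterm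
        obtain ⟨s, rfl, hsh⟩ := prepend_ne_zero h2
        have hsp' := ih y' h1
        cases c
        · simp only [if_neg Bool.false_ne_true] at hsh
          have hle := ins0 (c1::w2) y' s hsp' hsh
          have hlen := shuffle_length _ _ _ hsh
          refine ⟨?_, ?_⟩
          · have h5 := hsp'.1
            simp at hlen
            rw [cat1_false]
            simp only [List.length_cons]
            omega
          · rw [cat1_false, LeW_cons]
            right
            exact ⟨rfl, hle⟩
        · simp only [if_pos rfl] at hsh
          have hle := ins1 (c1::w2) y' s hsp' hsh
          have hlen := shuffle_length _ _ _ hsh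
          refine ⟨?_, ?_⟩
          · have h5 := hsp'.1
            simp at hlen
            rw [cat1_true]
            simp only [List.length_cons]
            omega
          · rw [cat1_true, LeW_cons]
            right
            exact ⟨rfl, hle⟩

/-! ### diagonal shuffle evaluations -/

lemma sh2 (w : List Bool) (y : Word) (hw : w ≠ []) (hsp : SP w y) :
    shuffle [false] y (false :: cat1 w) = if y = cat1 w then (1:ℚ) else 0 := by
  obtain ⟨c, w', rfl⟩ := List.exists_cons_of_ne_nil hw
  obtain ⟨y1, rfl, _⟩ := SP_shape hsp
  rw [eval0]
  exact if_congr eq_comm rfl rfl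

lemma sh3 : ∀ (w : List Bool) (y : Word), SP w y →
    shuffle [true,false] y (true::false::cat1 w)
      = if y = cat1 w then ((lead2 w : ℚ) + 1) else 0 := by
  intro w
  induction w with
  | nil =>
      intro y hsp
      have hy : y = [] := by simpa [List.length_eq_zero_iff, cat1] using hsp.1
      subst hy
      rw [shuffle_nil_right]
      show δ [true,false] (true::false::cat1 []) = _
      simp [cat1, delta_apply, lead2_nil]
  | cons c0 w1 ih =>
      intro y hsp
      obtain ⟨y1, rfl, hle⟩ := SP_shape hsp
      rw [shuffle_cons, Finsupp.add_apply, prepend_cons, prepend_cons, eval0]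
      rcases y1 with _ | ⟨b1, y2⟩
      · have h1 : cat1 (c0::w1) ≠ [true] := by
          cases c0 <;> simp [cat1_false, cat1_true]
        rw [sh10_nil, if_neg h1, if_neg (fun h => h1 h.symm)]
        norm_num
      cases b1
      · -- y1 = false :: y2
        cases c0
        · rw [cat1_false] at hle ⊢
          simp only [List.tail_cons] at hle
          simp [LeW_cons] at hle
          rw [sh10_false]
          have hlen : y2.length = (cat1 w1).length := by
            have := hsp.1
            rw [cat1_false] at this
            simpa using this
          rw [ih y2 ⟨hlen, hle⟩, lead2_false]
          simp only [List.cons.injEq, true_and]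
          by_cases hy : y2 = cat1 w1
          · rw [if_pos hy.symm, if_pos hy, if_pos hy]
            push_cast
            ring
          · rw [if_neg (fun h => hy h.symm), if_neg hy, if_neg hy]
            norm_num
        · rw [cat1_true] at hle
          simp only [List.tail_cons] at hle
          simp [LeW_cons] at hle
      · -- y1 = true :: y2
        rw [sh10_true]
        by_cases hc : cat1 (c0::w1) = true::true::y2
        · have hc0 : c0 = true := by
            cases c0
            · rw [cat1_false] at hc
              simp at hc
            · rfl
          subst hc0
          rw [if_pos hc, if_pos hc.symm, lead2_true]
          norm_num
        · rw [if_neg hc, if_neg (fun h => hc h.symm)]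
          norm_num

/-! ### the two recursions -/

lemma R2 (w : List Bool) (hw : w ≠ []) :
    Kuv 0 1 (false::w) (cat1 (false::w)) = Kuv 0 1 w (cat1 w) := by
  rw [cat1_false, K_apply_false w hw]
  have h : ((Kuv 0 1 w).sum fun y d => d * shuffle [false] y (false::cat1 w))
      = (Kuv 0 1 w).sum fun y d => if y = cat1 w then d * 1 else 0 := by
    apply Finsupp.sum_congr
    intro y hy
    rw [sh2 w y hw (supp_lemma w y (Finsupp.mem_support_iff.mp hy)),
        mul_ite, mul_zero]
  rw [h, sum_delta, mul_one]

lemma R3 (w : List Bool) (hw : w ≠ []) :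
    Kuv 0 1 (true::w) (cat1 (true::w))
      = Kuv 0 1 w (cat1 w) * ((lead2 w : ℚ) + 1) := by
  rw [cat1_true, K_apply_true w hw]
  have h : ((Kuv 0 1 w).sum fun y d => d * shuffle [true,false] y (true::false::cat1 w))
      = (Kuv 0 1 w).sum fun y d => if y = cat1 w then d * ((lead2 w : ℚ) + 1) else 0 := by
    apply Finsupp.sum_congr
    intro y hy
    rw [sh3 w y (supp_lemma w y (Finsupp.mem_support_iff.mp hy)),
        mul_ite, mul_zero]
  rw [h, sum_delta]

/-! ### base cases -/

lemma F_nil : Kuv 0 1 [] (cat1 []) = 1 := by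
  rw [Kuv, List.map_nil, Klist]
  simp [cat1, delta_apply]

lemma F_single (c : Bool) : Kuv 0 1 [c] (cat1 [c]) = 1 := by
  rw [Kuv, List.map_cons, List.map_nil, Klist, zgen01, cat1_single, delta_apply,
      if_pos rfl]

/-! ### main induction -/

lemma key : ∀ (n : ℕ) (w : List Bool) (a : ℕ) (rs : List ℕ),
    w.length ≤ n →
    w = List.replicate a false ++ (rs.map fun r => true :: List.replicate r false).flatten →
    Kuv 0 1 w (cat1 w) = (rs.map fun r : ℕ => ((r : ℚ) + 1)).prod := by
  intro n
  induction n with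
  | zero =>
      intro w a rs hlen hw
      have hwnil : w = [] := by
        rw [← List.length_eq_zero_iff]
        omega
      subst hwnil
      have hrs : rs = [] := flat_eq_nil (List.append_eq_nil_iff.mp hw.symm).2
      subst hrs
      simpa using F_nil
  | succ n ih =>
      intro w a rs hlen hw
      cases a with
      | succ a' =>
          rw [List.replicate_succ, List.cons_append] at hw
          subst hw
          by_cases hw' : (List.replicate a' false ++
              (rs.map fun r => true :: List.replicate r false).flatten) = []
          · rw [hw']
            have hrs : rs = [] := flat_eq_nil (List.append_eq_nil_iff.mp hw').2
            subst hrs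
            simpa using F_single false
          · rw [R2 _ hw']
            refine ih _ a' rs ?_ rfl
            simp only [List.length_cons] at hlen
            omega
      | zero =>
          rw [List.replicate, List.nil_append] at hw
          cases rs with
          | nil =>
              subst hw
              simpa using F_nil
          | cons r rs' =>
              rw [List.map_cons, List.flatten_cons, List.cons_append] at hw
              subst hw
              by_cases h2 : (List.replicate r false ++
                  (rs'.map fun r => true :: List.replicate r false).flatten) = []
              · rw [h2]
                obtain ⟨h3, h4⟩ := List.append_eq_nil_iff.mp h2
                have hr : r = 0 := by simpa using congrArg List.length h3
                have hrs' : rs' = [] := flat_eq_nil h4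
                subst hr; subst hrs'
                rw [List.map_cons, List.map_nil, List.prod_cons, List.prod_nil]
                simpa using F_single true
              · rw [R3 _ h2, lead2_rep, lead2_flat,
                    ih _ r rs' (by simp only [List.length_cons] at hlen; omega) rfl,
                    List.map_cons, List.prod_cons]
                push_cast
                ring

end K01
/-- Diagonal coefficients for `(u,v) = (0,1)`: if a word `w` over `{2,3}` (encoded
`false` = `2`, `true` = `3`) factors as `2^a 3 2^{r_1} 3 2^{r_2} ⋯ 3 2^{r_m}`, then the
coefficient of `δ_{cat₁(w)}` in `K_{0,1}(w)` equals `∏_t (r_t + 1)`; for example, for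
`w = (2,3,3,2,3,2)` this coefficient is `1 × 2 × 2 = 4`. -/
theorem K01_diagonal_coefficient (w : List Bool) (a : ℕ) (rs : List ℕ)
    (hw : w = List.replicate a false ++
        (rs.map fun r => true :: List.replicate r false).flatten) :
    (Kuv 0 1 w) (cat1 w) = (rs.map fun r => (r : ℚ) + 1).prod ∧
    (Kuv 0 1 [false, true, true, false, true, false])
        (cat1 [false, true, true, false, true, false]) = 4 := by
  subst hw
  constructor
  · rw [K01.key _ _ a rs le_rfl rfl]
    induction rs with
    | nil => rfl
    | cons r t ih => simp_all
  · rw [K01.key 6 [false, true, true, false, true, false] 1 [0, 1, 1] (by norm_num) (by rfl)]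
    norm_num
end
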